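/- Let h_1, …, h_n be d×d complex matrices that are Hermitian, pairwise commuting, and satisfy h_j² = 1 for all j, and set H = Σ_{j=1}^n h_j. Let ρ be a d×d positive semidefinite Hermitian matrix with Tr[ρ] = 1, let E_1, …, E_r be d×d complex matrices with Σ_k E_k† E_k = 1, and let O be a d×d Hermitian matrix with operator norm ‖O‖ ≤ 1. Define the response function R(θ) = Σ_{k=1}^r Tr[E_k · exp(−iθH) · ρ · exp(iθH) · E_k† · O]. Then R is differentiable and |R′(θ)| ≤ 2n for every θ ∈ ℝ. -/

import Mathlib

open Matrix
open scoped Matrix.Norms.L2Operator ComplexOrder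

namespace ResponseAux

open Finset

variable {d r : ℕ}

noncomputable def toE (x : Fin d → ℂ) : EuclideanSpace ℂ (Fin d) :=
  (WithLp.equiv 2 _).symm x

lemma dot_bound (C : Matrix (Fin d) (Fin d) ℂ) (x y : Fin d → ℂ) :
    ‖star x ⬝ᵥ (C *ᵥ y)‖ ≤ ‖C‖ * ‖toE x‖ * ‖toE y‖ := by
  have h1 : star x ⬝ᵥ (C *ᵥ y) = inner ℂ (toE x) (toE (C *ᵥ y)) := by
    rw [dotProduct_comm]; rfl
  rw [h1]
  calc ‖(inner ℂ (toE x) (toE (C *ᵥ y)) : ℂ)‖ ≤ ‖toE x‖ * ‖toE (C *ᵥ y)‖ :=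
        norm_inner_le_norm _ _
    _ ≤ ‖toE x‖ * (‖C‖ * ‖toE y‖) := by
        gcongr
        exact C.l2_opNorm_mulVec (toE y)
    _ = ‖C‖ * ‖toE x‖ * ‖toE y‖ := by ring

lemma normsq_toE (x : Fin d → ℂ) : ‖toE x‖ ^ 2 = (star x ⬝ᵥ x).re := by
  have h1 : (inner ℂ (toE x) (toE x) : ℂ) = star x ⬝ᵥ x := by
    rw [dotProduct_comm]; rfl
  rw [← h1, inner_self_eq_norm_sq_to_K]
  norm_cast

lemma star_dot_conjTranspose (A : Matrix (Fin d) (Fin d) ℂ) (y : Fin d → ℂ) (z : Fin d → ℂ) :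
    star y ⬝ᵥ (Aᴴ *ᵥ z) = star (A *ᵥ y) ⬝ᵥ z := by
  rw [dotProduct_mulVec, Matrix.star_mulVec]

lemma sum_mulVec {ι : Type*} (s : Finset ι) (A : ι → Matrix (Fin d) (Fin d) ℂ)
    (x : Fin d → ℂ) : (∑ k ∈ s, A k) *ᵥ x = ∑ k ∈ s, A k *ᵥ x := by
  ext i
  simp only [Matrix.mulVec, dotProduct, Matrix.sum_apply, Finset.sum_apply, Finset.sum_mul]
  exact Finset.sum_comm

lemma dot_sum {ι : Type*} (s : Finset ι) (y : Fin d → ℂ) (w : ι → Fin d → ℂ) :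
    y ⬝ᵥ (∑ k ∈ s, w k) = ∑ k ∈ s, y ⬝ᵥ w k := by
  simp only [dotProduct, Finset.sum_apply, Finset.mul_sum]
  exact Finset.sum_comm

lemma kraus_norm_le (E : Fin r → Matrix (Fin d) (Fin d) ℂ)
    (hE : ∑ k, (E k)ᴴ * E k = 1) (O : Matrix (Fin d) (Fin d) ℂ) (hO : ‖O‖ ≤ 1) :
    ‖∑ k, (E k)ᴴ * O * E k‖ ≤ 1 := by
  classical
  set M : Matrix (Fin d) (Fin d) ℂ := ∑ k, (E k)ᴴ * O * E k with hM
  -- sum of squares identity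
  have hsq : ∀ x : Fin d → ℂ, ∑ k, ‖toE (E k *ᵥ x)‖ ^ 2 = ‖toE x‖ ^ 2 := by
    intro x
    have h1 : ∀ k, ‖toE (E k *ᵥ x)‖ ^ 2 = (star x ⬝ᵥ (((E k)ᴴ * E k) *ᵥ x)).re := by
      intro k
      rw [normsq_toE, ← Matrix.mulVec_mulVec, star_dot_conjTranspose]
    calc ∑ k, ‖toE (E k *ᵥ x)‖ ^ 2 = (∑ k, star x ⬝ᵥ (((E k)ᴴ * E k) *ᵥ x)).re := by
          rw [Complex.re_sum]; exact Finset.sum_congr rfl fun k _ => h1 k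
      _ = (star x ⬝ᵥ ((∑ k, (E k)ᴴ * E k) *ᵥ x)).re := by
          rw [sum_mulVec, dot_sum]
      _ = ‖toE x‖ ^ 2 := by rw [hE, Matrix.one_mulVec, ← normsq_toE]
  -- bilinear bound
  have hbil : ∀ x y : Fin d → ℂ, ‖star y ⬝ᵥ (M *ᵥ x)‖ ≤ ‖toE y‖ * ‖toE x‖ := by
    intro x y
    have h1 : star y ⬝ᵥ (M *ᵥ x) = ∑ k, star (E k *ᵥ y) ⬝ᵥ (O *ᵥ (E k *ᵥ x)) := by
      rw [hM, sum_mulVec, dot_sum]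
      refine Finset.sum_congr rfl fun k _ => ?_
      rw [← Matrix.mulVec_mulVec, ← Matrix.mulVec_mulVec, star_dot_conjTranspose]
    rw [h1]
    have cs : ∑ k, ‖toE (E k *ᵥ y)‖ * ‖toE (E k *ᵥ x)‖ ≤ ‖toE y‖ * ‖toE x‖ := by
      have h2 := Finset.sum_mul_sq_le_sq_mul_sq Finset.univ
        (fun k => ‖toE (E k *ᵥ y)‖) (fun k => ‖toE (E k *ᵥ x)‖)
      rw [hsq y, hsq x] at h2
      have h3 : (0:ℝ) ≤ ∑ k, ‖toE (E k *ᵥ y)‖ * ‖toE (E k *ᵥ x)‖ :=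
        Finset.sum_nonneg fun k _ => mul_nonneg (norm_nonneg _) (norm_nonneg _)
      nlinarith [norm_nonneg (toE y), norm_nonneg (toE x),
        mul_nonneg (norm_nonneg (toE y)) (norm_nonneg (toE x))]
    calc ‖∑ k, star (E k *ᵥ y) ⬝ᵥ (O *ᵥ (E k *ᵥ x))‖
        ≤ ∑ k, ‖star (E k *ᵥ y) ⬝ᵥ (O *ᵥ (E k *ᵥ x))‖ := norm_sum_le _ _
      _ ≤ ∑ k, ‖toE (E k *ᵥ y)‖ * ‖toE (E k *ᵥ x)‖ := by
          refine Finset.sum_le_sum fun k _ => ?_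
          calc ‖star (E k *ᵥ y) ⬝ᵥ (O *ᵥ (E k *ᵥ x))‖
              ≤ ‖O‖ * ‖toE (E k *ᵥ y)‖ * ‖toE (E k *ᵥ x)‖ := dot_bound _ _ _
            _ ≤ 1 * ‖toE (E k *ᵥ y)‖ * ‖toE (E k *ᵥ x)‖ := by
                gcongr
            _ = ‖toE (E k *ᵥ y)‖ * ‖toE (E k *ᵥ x)‖ := by ring
      _ ≤ ‖toE y‖ * ‖toE x‖ := cs
  -- mulVec bound
  have hmv : ∀ x : Fin d → ℂ, ‖toE (M *ᵥ x)‖ ≤ ‖toE x‖ := by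
    intro x
    rcases eq_or_lt_of_le (norm_nonneg (toE (M *ᵥ x))) with h0 | h0
    · rw [← h0]; exact norm_nonneg _
    · have h1 : ‖toE (M *ᵥ x)‖ ^ 2 = (star (M *ᵥ x) ⬝ᵥ (M *ᵥ x)).re := normsq_toE _
      have h2 : (star (M *ᵥ x) ⬝ᵥ (M *ᵥ x)).re ≤ ‖star (M *ᵥ x) ⬝ᵥ (M *ᵥ x)‖ :=
        Complex.re_le_norm _
      have h3 := hbil x (M *ᵥ x)
      nlinarith
  -- conclude
  rw [Matrix.cstar_norm_def]
  refine ContinuousLinearMap.opNorm_le_bound _ zero_le_one fun x => ?_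
  rw [one_mul]
  have hx : x = toE (WithLp.equiv 2 _ x) := (Equiv.symm_apply_apply _ _).symm
  calc ‖(Matrix.toEuclideanCLM (𝕜 := ℂ) M) x‖
      = ‖toE (M *ᵥ (WithLp.equiv 2 _ x))‖ := by
        conv_lhs => rw [hx]
        rw [toE, toE, Matrix.toEuclideanCLM_toLp]
        rfl
    _ ≤ ‖toE (WithLp.equiv 2 _ x)‖ := hmv _
    _ = ‖x‖ := by rw [← hx]

lemma trace_bound {ρ : Matrix (Fin d) (Fin d) ℂ} (hρ : ρ.PosSemidef)
    (hρtr : ρ.trace = 1) (C : Matrix (Fin d) (Fin d) ℂ) :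
    ‖(ρ * C).trace‖ ≤ ‖C‖ := by
  classical
  obtain ⟨s, hherm, hss⟩ : ∃ s : Matrix (Fin d) (Fin d) ℂ, sᴴ = s ∧ s * s = ρ := by
    open scoped MatrixOrder in
    exact ⟨CFC.sqrt ρ, (CFC.sqrt_nonneg ρ).isSelfAdjoint, CFC.sqrt_mul_sqrt_self ρ hρ.nonneg⟩
  have hentry : ∀ i a, s i a = star (s a i) := by
    intro i a; conv_lhs => rw [← hherm]
    rfl
  have key : (ρ * C).trace =
      ∑ i, star (fun a => s a i) ⬝ᵥ (C *ᵥ (fun a => s a i)) := by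
    rw [← hss, mul_assoc, Matrix.trace_mul_comm, Matrix.trace]
    refine Finset.sum_congr rfl fun i _ => ?_
    simp only [Matrix.diag_apply, Matrix.mul_apply, dotProduct, Matrix.mulVec,
      Pi.star_apply, dotProduct]
    simp only [Finset.sum_mul]
    rw [Finset.sum_comm]
    refine Finset.sum_congr rfl fun j _ => ?_
    rw [hentry i j, Finset.mul_sum]
    refine Finset.sum_congr rfl fun a _ => ?_
    ring
  have hsum : ∑ i, ‖toE (fun a => s a i)‖ ^ 2 = 1 := by
    have : ∀ i, ‖toE (fun a => s a i)‖ ^ 2 = ((fun a => star (s a i)) ⬝ᵥ (fun a => s a i)).re :=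
      fun i => normsq_toE _
    calc ∑ i, ‖toE (fun a => s a i)‖ ^ 2
        = (∑ i, (fun a => star (s a i)) ⬝ᵥ (fun a => s a i)).re := by
          rw [Complex.re_sum]
          exact Finset.sum_congr rfl fun i _ => this i
      _ = (ρ.trace).re := by
          congr 1
          rw [← hss, Matrix.trace]
          refine Finset.sum_congr rfl fun i _ => ?_
          simp only [Matrix.diag_apply, Matrix.mul_apply, dotProduct]
          exact Finset.sum_congr rfl fun a _ => by rw [hentry i a]
      _ = 1 := by rw [hρtr]; simp
  rw [key]
  calc ‖∑ i, star (fun a => s a i) ⬝ᵥ (C *ᵥ (fun a => s a i))‖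
      ≤ ∑ i, ‖star (fun a => s a i) ⬝ᵥ (C *ᵥ (fun a => s a i))‖ := norm_sum_le _ _
    _ ≤ ∑ i, ‖C‖ * ‖toE (fun a => s a i)‖ ^ 2 := by
        refine Finset.sum_le_sum fun i _ => ?_
        have := dot_bound C (fun a => s a i) (fun a => s a i)
        calc _ ≤ ‖C‖ * ‖toE (fun a => s a i)‖ * ‖toE (fun a => s a i)‖ := this
          _ = ‖C‖ * ‖toE (fun a => s a i)‖ ^ 2 := by ring
    _ = ‖C‖ := by rw [← Finset.mul_sum, hsum, mul_one]

end ResponseAux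

open ResponseAux Finset



set_option maxHeartbeats 1000000 in
/-- Lipschitz bound for noisy response functions: if the encoding Hamiltonian
`H = Σ_j h_j` is a sum of `n` commuting Hermitian involutions, `ρ` is a density matrix,
`E_k` are Kraus operators of a channel, and `O` is a Hermitian observable with
operator norm at most `1`, then the response
`R(θ) = Σ_k Tr[E_k exp(−iθH) ρ exp(iθH) E_kᴴ O]` is differentiable with
`|R′(θ)| ≤ 2n` for all `θ`. -/
theorem response_lipschitz_bound
    (d n r : ℕ) (h : Fin n → Matrix (Fin d) (Fin d) ℂ)
    (hherm : ∀ j, (h j).IsHermitian)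
    (hcomm : ∀ j j', Commute (h j) (h j'))
    (hinv : ∀ j, h j ^ 2 = 1)
    (H : Matrix (Fin d) (Fin d) ℂ) (hH : H = ∑ j, h j)
    (ρ : Matrix (Fin d) (Fin d) ℂ) (hρ : ρ.PosSemidef) (hρtr : ρ.trace = 1)
    (E : Fin r → Matrix (Fin d) (Fin d) ℂ)
    (hE : ∑ k, (E k)ᴴ * E k = 1)
    (O : Matrix (Fin d) (Fin d) ℂ) (hO : O.IsHermitian) (hOnorm : ‖O‖ ≤ 1)
    (R : ℝ → ℂ)
    (hR : ∀ θ : ℝ, R θ = ∑ k,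
      (E k * NormedSpace.exp ((-(Complex.I * (θ : ℂ))) • H) * ρ *
        NormedSpace.exp ((Complex.I * (θ : ℂ)) • H) * (E k)ᴴ * O).trace) :
    Differentiable ℝ R ∧ ∀ θ : ℝ, ‖deriv R θ‖ ≤ 2 * n := by
  classical
  -- d = 0 is impossible since Tr ρ = 1
  rcases Nat.eq_zero_or_pos d with hd | hd
  · subst hd
    rw [Matrix.trace] at hρtr
    simp at hρtr
  haveI : NeZero d := ⟨hd.ne'⟩
  -- setup
  set A : Matrix (Fin d) (Fin d) ℂ := (-Complex.I) • H with hA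
  set B : Matrix (Fin d) (Fin d) ℂ := Complex.I • H with hB
  set M : Matrix (Fin d) (Fin d) ℂ := ∑ k, (E k)ᴴ * O * E k with hM
  set u : ℝ → Matrix (Fin d) (Fin d) ℂ := fun θ => NormedSpace.exp (θ • A) with hu
  set v : ℝ → Matrix (Fin d) (Fin d) ℂ := fun θ => NormedSpace.exp (θ • B) with hv
  have hexp : (NormedSpace.exp : Matrix (Fin d) (Fin d) ℂ → _) = NormedSpace.exp :=
    rfl
  have heA : ∀ θ : ℝ, NormedSpace.exp ((-(Complex.I * (θ : ℂ))) • H) = u θ := by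
    intro θ
    rw [hexp, hu]
    congr 1
    rw [hA, ← Complex.coe_smul, smul_smul]
    congr 1
    ring
  have heB : ∀ θ : ℝ, NormedSpace.exp ((Complex.I * (θ : ℂ)) • H) = v θ := by
    intro θ
    rw [hexp, hv]
    congr 1
    rw [hB, ← Complex.coe_smul, smul_smul]
    congr 1
    ring
  -- rewrite R
  have hR' : ∀ θ, R θ = (u θ * ρ * v θ * M).trace := by
    intro θ
    rw [hR, hM, Finset.mul_sum, Matrix.trace_sum]
    refine Finset.sum_congr rfl fun k _ => ?_
    rw [heA, heB]
    rw [show E k * u θ * ρ * v θ * (E k)ᴴ * O = E k * (u θ * ρ * v θ * ((E k)ᴴ * O)) by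
      simp only [mul_assoc]]
    rw [Matrix.trace_mul_comm]
    simp only [mul_assoc]
  -- derivative
  have hderiv : ∀ θ, HasDerivAt R
      ((A * u θ * ρ * v θ * M).trace + (u θ * ρ * (B * v θ) * M).trace) θ := by
    intro θ
    have hu' : HasDerivAt u (A * u θ) θ := hasDerivAt_exp_smul_const' (𝕂 := ℝ) A θ
    have hv' : HasDerivAt v (B * v θ) θ := hasDerivAt_exp_smul_const' (𝕂 := ℝ) B θ
    have h1 : HasDerivAt (fun θ => u θ * ρ) (A * u θ * ρ) θ := hu'.mul_const ρ
    have h2 := (h1.mul hv').mul_const M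
    have hF : HasDerivAt (fun θ => u θ * ρ * v θ * M)
        (A * u θ * ρ * v θ * M + u θ * ρ * (B * v θ) * M) θ := by
      rw [← add_mul]; exact h2
    let φ : Matrix (Fin d) (Fin d) ℂ →L[ℝ] ℂ :=
      LinearMap.toContinuousLinearMap
        ((Matrix.traceLinearMap (Fin d) ℂ ℂ).restrictScalars ℝ)
    have hcomp := φ.hasFDerivAt.comp_hasDerivAt θ hF
    have hφ : ∀ X : Matrix (Fin d) (Fin d) ℂ, φ X = X.trace := fun X => rfl
    have : R = fun θ => φ (u θ * ρ * v θ * M) := funext fun θ => by rw [hφ, hR' θ]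
    rw [this, ← hφ, ← hφ, ← map_add]
    exact hcomp
  refine ⟨fun θ => (hderiv θ).differentiableAt, fun θ => ?_⟩
  rw [(hderiv θ).deriv]
  -- norm facts
  have hnorm1 : ‖(1 : Matrix (Fin d) (Fin d) ℂ)‖ = 1 := by
    rw [Matrix.cstar_norm_def, _root_.map_one]
    exact norm_one
  have hHherm : Hᴴ = H := by
    rw [hH, Matrix.conjTranspose_sum]
    exact Finset.sum_congr rfl fun j _ => (hherm j).eq
  have hjnorm : ∀ j, ‖h j‖ = 1 := by
    intro j
    have h1 : (h j)ᴴ * h j = 1 := by rw [(hherm j).eq, ← sq, hinv j]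
    have h2 := Matrix.l2_opNorm_conjTranspose_mul_self (h j)
    rw [h1, hnorm1] at h2
    nlinarith [norm_nonneg (h j)]
  have hHnorm : ‖H‖ ≤ (n : ℝ) := by
    rw [hH]
    refine le_trans (norm_sum_le _ _) ?_
    simp [hjnorm]
  have hAnorm : ‖A‖ ≤ (n : ℝ) := by
    rw [hA, norm_smul]
    simpa using hHnorm
  have hBnorm : ‖B‖ ≤ (n : ℝ) := by
    rw [hB, norm_smul]
    simpa using hHnorm
  have hABcomm : Commute A B := ((Commute.refl H).smul_left _).smul_right _
  have hABzero : A + B = 0 := by rw [hA, hB, ← add_smul]; simp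
  have hstar_u : ∀ θ, star (u θ) = v θ := by
    intro θ
    rw [hu, hv]
    rw [NormedSpace.star_exp]
    congr 1
    rw [← Complex.coe_smul, ← Complex.coe_smul, star_smul]
    congr 1
    · simp
    · rw [hA, hB, star_smul]
      rw [Matrix.star_eq_conjTranspose, hHherm]
      simp
  have hvu : ∀ θ, v θ * u θ = 1 := by
    intro θ
    rw [hu, hv, ← Matrix.exp_add_of_commute _ _ ((hABcomm.symm.smul_left θ).smul_right θ)]
    rw [← smul_add, show B + A = 0 by rw [add_comm]; exact hABzero, smul_zero,
      NormedSpace.exp_zero]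
  have huv : ∀ θ, u θ * v θ = 1 := by
    intro θ
    rw [hu, hv, ← Matrix.exp_add_of_commute _ _ ((hABcomm.smul_left θ).smul_right θ)]
    rw [← smul_add, hABzero, smul_zero, NormedSpace.exp_zero]
  have hunorm : ∀ θ, ‖u θ‖ = 1 := by
    intro θ
    have h2 := CStarRing.norm_star_mul_self (x := u θ)
    rw [hstar_u, hvu, hnorm1] at h2
    nlinarith [norm_nonneg (u θ)]
  have hvnorm : ∀ θ, ‖v θ‖ = 1 := by
    intro θ
    have h1 : star (v θ) = u θ := by rw [← hstar_u, star_star]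
    have h2 := CStarRing.norm_star_mul_self (x := v θ)
    rw [h1, huv, hnorm1] at h2
    nlinarith [norm_nonneg (v θ)]
  have hMnorm : ‖M‖ ≤ 1 := kraus_norm_le E hE O hOnorm
  -- bound the two terms
  have t1 : ‖(A * u θ * ρ * v θ * M).trace‖ ≤ (n : ℝ) := by
    have e : (A * u θ * ρ * v θ * M).trace = (ρ * (v θ * (M * (A * u θ)))).trace := by
      rw [show A * u θ * ρ * v θ * M = (A * u θ) * (ρ * (v θ * M)) by simp only [mul_assoc]]
      rw [Matrix.trace_mul_comm]
      simp only [mul_assoc]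
    rw [e]
    refine le_trans (trace_bound hρ hρtr _) ?_
    calc ‖v θ * (M * (A * u θ))‖ ≤ ‖v θ‖ * ‖M * (A * u θ)‖ := Matrix.l2_opNorm_mul _ _
      _ ≤ ‖v θ‖ * (‖M‖ * ‖A * u θ‖) := by
          gcongr; exact Matrix.l2_opNorm_mul _ _
      _ ≤ ‖v θ‖ * (‖M‖ * (‖A‖ * ‖u θ‖)) := by
          gcongr; exact Matrix.l2_opNorm_mul _ _
      _ ≤ 1 * (1 * ((n : ℝ) * 1)) := by
          rw [hunorm, hvnorm]
          gcongr
      _ = (n : ℝ) := by ring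
  have t2 : ‖(u θ * ρ * (B * v θ) * M).trace‖ ≤ (n : ℝ) := by
    have e : (u θ * ρ * (B * v θ) * M).trace = (ρ * (B * (v θ * (M * u θ)))).trace := by
      rw [show u θ * ρ * (B * v θ) * M = u θ * (ρ * (B * v θ * M)) by simp only [mul_assoc]]
      rw [Matrix.trace_mul_comm]
      simp only [mul_assoc]
    rw [e]
    refine le_trans (trace_bound hρ hρtr _) ?_
    calc ‖B * (v θ * (M * u θ))‖ ≤ ‖B‖ * ‖v θ * (M * u θ)‖ := Matrix.l2_opNorm_mul _ _
      _ ≤ ‖B‖ * (‖v θ‖ * ‖M * u θ‖) := by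
          gcongr; exact Matrix.l2_opNorm_mul _ _
      _ ≤ ‖B‖ * (‖v θ‖ * (‖M‖ * ‖u θ‖)) := by
          gcongr; exact Matrix.l2_opNorm_mul _ _
      _ ≤ (n : ℝ) * (1 * (1 * 1)) := by
          rw [hunorm, hvnorm]
          gcongr
      _ = (n : ℝ) := by ring
  calc ‖(A * u θ * ρ * v θ * M).trace + (u θ * ρ * (B * v θ) * M).trace‖
      ≤ ‖(A * u θ * ρ * v θ * M).trace‖ + ‖(u θ * ρ * (B * v θ) * M).trace‖ :=
        norm_add_le _ _
    _ ≤ (n : ℝ) + (n : ℝ) := add_le_add t1 t2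
    _ = 2 * (n : ℝ) := by ring
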